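/- The set 𝒢₀ = { x_a x_b − x_{a∧b} x_{a∨b} : a, b ∈ [𝐧], a < b lexicographically and a_i > b_i for some i } is a reduced Gröbner basis, with respect to the graded reverse lexicographic order, of the ideal I₀ generated by all binomials x_a x_b − x_{a∧b} x_{a∨b}. -/

import Mathlib

open MvPolynomial

/-- Multi-index set `[n₁] × ⋯ × [n_d]`. -/
abbrev Idx {d : ℕ} (n : Fin d → ℕ) : Type := ∀ i, Fin (n i)

/-- Componentwise minimum of multi-indices. -/
def amin {d : ℕ} {n : Fin d → ℕ} (a b : Idx n) : Idx n := fun i => min (a i) (b i)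

/-- Componentwise maximum of multi-indices. -/
def amax {d : ℕ} {n : Fin d → ℕ} (a b : Idx n) : Idx n := fun i => max (a i) (b i)

/-- Lexicographic order on multi-indices: `a < b` iff at the first position where they
differ, `a` is smaller.  (With this convention the variable `x_a` is *larger* in the
variable order `x_{1⋯1} > x_{1⋯2} > ⋯ > x_{n₁⋯n_d}` exactly when `a` is lexicographically
smaller.) -/
def idxLt {d : ℕ} {n : Fin d → ℕ} (a b : Idx n) : Prop :=
  ∃ i, a i < b i ∧ ∀ j, j < i → a j = b j

/-- Total degree of an exponent vector. -/
def expDeg {σ : Type*} (α : σ →₀ ℕ) : ℕ := α.sum fun _ k => k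

/-- The graded reverse lexicographic order on exponent vectors (viewing the variable
`x_a` with lexicographically smaller index `a` as the larger variable): `α < β` iff
`deg α < deg β`, or the degrees agree and at the largest (in the variable order, i.e.
lexicographically largest) index where they differ, `α` has the *larger* exponent. -/
def grevlexLt {d : ℕ} {n : Fin d → ℕ} (α β : Idx n →₀ ℕ) : Prop :=
  expDeg α < expDeg β ∨
    (expDeg α = expDeg β ∧ ∃ j, β j < α j ∧ ∀ k, idxLt j k → α k = β k)

/-- `m` is the leading monomial (w.r.t. grevlex) of the polynomial `f`. -/
def IsLeadMon {d : ℕ} {n : Fin d → ℕ} (f : MvPolynomial (Idx n) ℝ)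
    (m : Idx n →₀ ℕ) : Prop :=
  m ∈ f.support ∧ ∀ m' ∈ f.support, m' ≠ m → grevlexLt m' m

/-- `G` is a Gröbner basis of the ideal `I` w.r.t. grevlex: `G` generates `I` and the
leading monomial of every nonzero element of `I` is divisible by the leading monomial of
some element of `G`. -/
def IsGroebnerBasis {d : ℕ} {n : Fin d → ℕ} (G : Set (MvPolynomial (Idx n) ℝ))
    (I : Ideal (MvPolynomial (Idx n) ℝ)) : Prop :=
  Ideal.span G = I ∧
    ∀ f ∈ I, f ≠ 0 → ∀ m, IsLeadMon f m →
      ∃ g ∈ G, ∃ mg, IsLeadMon g mg ∧ mg ≤ m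

/-- `G` is a *reduced* Gröbner basis of `I`: it is a Gröbner basis, every element is monic,
and no monomial of an element of `G` is divisible by the leading monomial of another
element of `G`. -/
def IsReducedGroebnerBasis {d : ℕ} {n : Fin d → ℕ} (G : Set (MvPolynomial (Idx n) ℝ))
    (I : Ideal (MvPolynomial (Idx n) ℝ)) : Prop :=
  IsGroebnerBasis G I ∧
    ∀ g ∈ G, (∀ m, IsLeadMon g m → coeff m g = 1) ∧
      ∀ m ∈ g.support, ∀ g' ∈ G, g' ≠ g → ∀ m', IsLeadMon g' m' → ¬ m' ≤ m

/-- The set of rank-1 binomials `x_a x_b − x_{a∧b} x_{a∨b}`. -/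
noncomputable def rk1Binomials {d : ℕ} (n : Fin d → ℕ) : Set (MvPolynomial (Idx n) ℝ) :=
  {f | ∃ a b : Idx n, f = X a * X b - X (amin a b) * X (amax a b)}

/-- The ideal `I₀` generated by all rank-1 binomials. -/
noncomputable def I0 {d : ℕ} (n : Fin d → ℕ) : Ideal (MvPolynomial (Idx n) ℝ) :=
  Ideal.span (rk1Binomials n)

/-- The reduced Gröbner basis `𝒢₀` of `I₀`. -/
noncomputable def G0 {d : ℕ} (n : Fin d → ℕ) : Set (MvPolynomial (Idx n) ℝ) :=
  {f | ∃ a b : Idx n, idxLt a b ∧ (∃ i, b i < a i) ∧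
    f = X a * X b - X (amin a b) * X (amax a b)}

section
variable {d : ℕ} {n : Fin d → ℕ}

lemma idxLt_asymm {a b : Idx n} (h1 : idxLt a b) (h2 : idxLt b a) : False := by
  obtain ⟨i, hi, hpi⟩ := h1
  obtain ⟨j, hj, hpj⟩ := h2
  rcases lt_trichotomy i j with h | h | h
  · exact absurd (hpj i h).symm (ne_of_lt hi)
  · subst h; exact absurd hj (not_lt.2 hi.le)
  · exact absurd (hpi j h).symm (ne_of_lt hj)

lemma idxLt_irrefl (a : Idx n) : ¬ idxLt a a := fun h => idxLt_asymm h h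

lemma idxLt_trichotomy {a b : Idx n} (h : a ≠ b) : idxLt a b ∨ idxLt b a := by
  have hne : (Finset.univ.filter fun i => a i ≠ b i).Nonempty := by
    by_contra hcon
    rw [Finset.not_nonempty_iff_eq_empty, Finset.filter_eq_empty_iff] at hcon
    exact h (funext fun i => not_ne_iff.1 (hcon (Finset.mem_univ i)))
  set s := Finset.univ.filter fun i => a i ≠ b i with hs
  set i := s.min' hne with hi
  have himem : i ∈ s := s.min'_mem hne
  have hine : a i ≠ b i := (Finset.mem_filter.1 himem).2
  have hmin : ∀ j, j < i → a j = b j := by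
    intro j hj
    by_contra hcon
    have : j ∈ s := Finset.mem_filter.2 ⟨Finset.mem_univ j, hcon⟩
    exact absurd (s.min'_le j this) (not_le.2 hj)
  rcases lt_or_gt_of_ne hine with hlt | hgt
  · exact Or.inl ⟨i, hlt, hmin⟩
  · exact Or.inr ⟨i, hgt, fun j hj => (hmin j hj).symm⟩

lemma not_idxLt_of_le {a b : Idx n} (h : b ≤ a) : ¬ idxLt a b := by
  rintro ⟨i, hi, -⟩
  exact absurd hi (not_lt.2 (h i))

lemma grevlexLt_asymm {α β : Idx n →₀ ℕ} (h1 : grevlexLt α β) (h2 : grevlexLt β α) : False := by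
  rcases h1 with h1 | ⟨hd1, j1, hj1, hp1⟩
  · rcases h2 with h2 | ⟨hd2, -⟩ <;> omega
  · rcases h2 with h2 | ⟨hd2, j2, hj2, hp2⟩
    · omega
    · have hne : j1 ≠ j2 := by
        rintro rfl; exact absurd hj2 (not_lt.2 hj1.le)
      rcases idxLt_trichotomy hne with h | h
      · exact absurd (hp1 j2 h) (ne_of_lt hj2)
      · exact absurd (hp2 j1 h) (ne_of_lt hj1)

lemma expDeg_add {α β : Idx n →₀ ℕ} : expDeg (α + β) = expDeg α + expDeg β := by
  unfold expDeg
  exact Finsupp.sum_add_index' (fun _ => rfl) (fun _ _ _ => rfl)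

lemma expDeg_single {a : Idx n} {k : ℕ} : expDeg (Finsupp.single a k) = k := by
  unfold expDeg
  exact Finsupp.sum_single_index rfl

lemma le_expDeg (u : Idx n →₀ ℕ) (a : Idx n) : u a ≤ expDeg u := by
  by_cases h : a ∈ u.support
  · exact Finset.single_le_sum (f := fun b => u b) (fun _ _ => Nat.zero_le _) h
  · simp [Finsupp.notMem_support_iff.1 h]

lemma expDeg_eq_zero {u : Idx n →₀ ℕ} (h : expDeg u = 0) : u = 0 := by
  ext a
  have := le_expDeg u a
  rw [h] at this
  simpa using this

end

section
variable {d : ℕ} {n : Fin d → ℕ}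

/-- multiset of i-th coordinates with multiplicity -/
def coordMS (u : Idx n →₀ ℕ) : Fin d → Multiset ℕ :=
  fun i => u.sum fun a k => k • ({(a i : ℕ)} : Multiset ℕ)

def psi (u : Idx n →₀ ℕ) : ℕ × (Fin d → Multiset ℕ) := (expDeg u, coordMS u)

lemma coordMS_add {u v : Idx n →₀ ℕ} : coordMS (u + v) = coordMS u + coordMS v := by
  funext i
  show ((u + v).sum fun a k => k • ({(a i : ℕ)} : Multiset ℕ)) =
    (u.sum fun a k => k • ({(a i : ℕ)} : Multiset ℕ)) +
    (v.sum fun a k => k • ({(a i : ℕ)} : Multiset ℕ))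
  exact Finsupp.sum_add_index' (fun a => zero_smul _ _) (fun a k1 k2 => add_smul k1 k2 _)

lemma psi_add {u v : Idx n →₀ ℕ} : psi (u + v) = psi u + psi v := by
  unfold psi
  rw [Prod.mk_add_mk (M := ℕ) (N := Fin d → Multiset ℕ)]
  rw [expDeg_add, coordMS_add]

lemma psi_zero : psi (0 : Idx n →₀ ℕ) = 0 := by
  unfold psi
  have h1 : expDeg (0 : Idx n →₀ ℕ) = 0 := by unfold expDeg; simp
  have h2 : coordMS (0 : Idx n →₀ ℕ) = 0 := by
    funext i; unfold coordMS; simp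
  rw [h1, h2]; rfl

lemma psi_fst {u : Idx n →₀ ℕ} : (psi u).1 = expDeg u := rfl

lemma coordMS_single {a : Idx n} {k : ℕ} {i : Fin d} :
    coordMS (Finsupp.single a k) i = k • ({(a i : ℕ)} : Multiset ℕ) := by
  unfold coordMS
  exact Finsupp.sum_single_index (zero_smul _ _)

lemma count_coordMS (u : Idx n →₀ ℕ) (i : Fin d) (x : ℕ) :
    Multiset.count x (coordMS u i) =
      ∑ a ∈ u.support, (if x = (a i : ℕ) then u a else 0) := by
  unfold coordMS Finsupp.sum
  rw [Multiset.count_sum']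
  refine Finset.sum_congr rfl fun a _ => ?_
  rw [Multiset.count_nsmul, Multiset.count_singleton]
  split <;> simp_all

lemma mem_coordMS {u : Idx n →₀ ℕ} {a : Idx n} (h : a ∈ u.support) (i : Fin d) :
    (a i : ℕ) ∈ coordMS u i := by
  rw [← Multiset.count_pos, count_coordMS]
  have h1 : 0 < u a := Nat.pos_of_ne_zero (Finsupp.mem_support_iff.1 h)
  calc 0 < u a := h1
    _ = (if (a i : ℕ) = (a i : ℕ) then u a else 0) := by simp
    _ ≤ _ := Finset.single_le_sum (f := fun b => if (a i : ℕ) = (b i : ℕ) then u b else 0)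
        (fun _ _ => by positivity) h

lemma exists_of_mem_coordMS {u : Idx n →₀ ℕ} {x : ℕ} {i : Fin d} (h : x ∈ coordMS u i) :
    ∃ a ∈ u.support, (a i : ℕ) = x := by
  rw [← Multiset.count_pos, count_coordMS] at h
  obtain ⟨a, ha, hne⟩ := Finset.exists_ne_zero_of_sum_ne_zero
    (f := fun a => if x = (a i : ℕ) then u a else 0) (Nat.pos_iff_ne_zero.1 h)
  refine ⟨a, ha, ?_⟩
  by_contra hc
  simp [Ne.symm hc] at hne

end

section
variable {d : ℕ} {n : Fin d → ℕ}

lemma chain_grevlex_min (N : ℕ) : ∀ (m u : Idx n →₀ ℕ), expDeg m ≤ N →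
    (∀ a ∈ m.support, ∀ b ∈ m.support, a ≤ b ∨ b ≤ a) →
    psi m = psi u → m ≠ u → grevlexLt m u := by
  induction N with
  | zero =>
    intro m u hdeg _ hpsi hne
    exfalso
    have hm0 : m = 0 := expDeg_eq_zero (Nat.le_zero.1 hdeg)
    have hdmu : expDeg m = expDeg u := congrArg Prod.fst hpsi
    have hdu : expDeg u = 0 := by omega
    exact hne (hm0.trans (expDeg_eq_zero hdu).symm)
  | succ N ih =>
    intro m u hdeg hchain hpsi hne
    have hdm : expDeg m = expDeg u := congrArg Prod.fst hpsi
    have hcms : coordMS m = coordMS u := congrArg Prod.snd hpsi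
    rcases Finset.eq_empty_or_nonempty m.support with hemp | hne'
    · exfalso
      have hm0 : m = 0 := Finsupp.support_eq_empty.1 hemp
      have hd0 : expDeg m = 0 := by rw [hm0]; unfold expDeg; simp
      have hdu : expDeg u = 0 := by omega
      exact hne (hm0.trans (expDeg_eq_zero hdu).symm)
    obtain ⟨c, hc_mem, hc_max⟩ : ∃ c ∈ m.support, ∀ b ∈ m.support, ¬ c < b := by
      obtain ⟨c, hc⟩ := Finset.exists_maximal hne'
      exact ⟨c, hc.1, fun b hb hcb => absurd (hc.2 hb hcb.le) hcb.not_ge⟩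
    have hcle : ∀ b ∈ m.support, b ≤ c := by
      intro b hb
      rcases hchain b hb c hc_mem with h | h
      · exact h
      · rcases h.lt_or_eq with h' | h'
        · exact absurd h' (hc_max b hb)
        · exact h'.ge
    have claim1 : ∀ a ∈ u.support, a ≤ c := by
      intro a ha i
      have hmem := mem_coordMS ha i
      rw [← hcms] at hmem
      obtain ⟨b, hb, hbi⟩ := exists_of_mem_coordMS hmem
      have hbc : b i ≤ c i := hcle b hb i
      have hba : b i = a i := Fin.val_injective hbi
      rw [← hba]; exact hbc
    have claim2 : u c ≤ m c := by
      by_cases hsub1 : m.support ⊆ {c}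
      · have hm : m = Finsupp.single c (m c) := Finsupp.support_subset_singleton.1 hsub1
        have hdmc : expDeg m = m c := by
          conv_lhs => rw [hm]
          exact expDeg_single
        calc u c ≤ expDeg u := le_expDeg u c
          _ = expDeg m := hdm.symm
          _ = m c := hdmc
      · obtain ⟨a₀, ha₀s, ha₀c⟩ := Finset.not_subset.1 hsub1
        have hs'ne : (m.support.erase c).Nonempty :=
          ⟨a₀, Finset.mem_erase.2 ⟨by simpa using ha₀c, ha₀s⟩⟩
        obtain ⟨a, ha_mem, ha_max⟩ : ∃ a ∈ m.support.erase c, ∀ b ∈ m.support.erase c, ¬ a < b := by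
            obtain ⟨a, ha⟩ := Finset.exists_maximal hs'ne
            exact ⟨a, ha.1, fun b hb hab => absurd (ha.2 hb hab.le) hab.not_ge⟩
        have ha_supp : a ∈ m.support := (Finset.mem_erase.1 ha_mem).2
        have hanec : a ≠ c := (Finset.mem_erase.1 ha_mem).1
        have halec : a ≤ c := hcle a ha_supp
        obtain ⟨i, hi⟩ : ∃ i, a i < c i := by
          by_contra hcon; push_neg at hcon
          exact hanec (le_antisymm halec fun i => hcon i)
        have h1 : u c ≤ Multiset.count (c i : ℕ) (coordMS u i) := by
          rw [count_coordMS]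
          by_cases hcu : c ∈ u.support
          · calc u c = (if ((c i : ℕ) = (c i : ℕ)) then u c else 0) := by simp
              _ ≤ _ := Finset.single_le_sum
                  (f := fun b => if (c i : ℕ) = (b i : ℕ) then u b else 0)
                  (fun _ _ => by positivity) hcu
          · simp [Finsupp.notMem_support_iff.1 hcu]
        have h2 : Multiset.count (c i : ℕ) (coordMS m i) = m c := by
          rw [count_coordMS]
          rw [Finset.sum_eq_single_of_mem c hc_mem]
          · simp
          · intro b hb hbc
            have hb' : b ∈ m.support.erase c := Finset.mem_erase.2 ⟨hbc, hb⟩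
            have hble : b ≤ a := by
              rcases hchain b hb a ha_supp with h | h
              · exact h
              · rcases h.lt_or_eq with h' | h'
                · exact absurd h' (ha_max b hb')
                · exact h'.ge
            have hlt : b i < c i := lt_of_le_of_lt (hble i) hi
            have : (c i : ℕ) ≠ (b i : ℕ) :=
              fun h => absurd (Fin.val_injective h.symm) (ne_of_lt hlt)
            simp [this]
        rw [hcms] at h2
        omega
    by_cases hlt : u c < m c
    · refine Or.inr ⟨hdm, c, hlt, fun k hk => ?_⟩
      have hkm : m k = 0 := by
        by_contra h
        exact not_idxLt_of_le (hcle k (Finsupp.mem_support_iff.2 h)) hk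
      have hku : u k = 0 := by
        by_contra h
        exact not_idxLt_of_le (claim1 k (Finsupp.mem_support_iff.2 h)) hk
      rw [hkm, hku]
    · have heq : u c = m c := le_antisymm claim2 (not_lt.1 hlt)
      have htpos : m c ≠ 0 := Finsupp.mem_support_iff.1 hc_mem
      have hm'm : m.erase c + Finsupp.single c (m c) = m := Finsupp.erase_add_single c m
      have hu'u : u.erase c + Finsupp.single c (u c) = u := Finsupp.erase_add_single c u
      have hdeg' : expDeg (m.erase c) + m c = expDeg m := by
        conv_rhs => rw [← hm'm]
        rw [expDeg_add, expDeg_single]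
      have hpsi' : psi (m.erase c) = psi (u.erase c) := by
        have h1 : psi (m.erase c) + psi (Finsupp.single c (m c)) =
            psi (u.erase c) + psi (Finsupp.single c (u c)) := by
          rw [← psi_add, ← psi_add, hm'm, hu'u, hpsi]
        rw [heq] at h1
        exact add_right_cancel h1
      have hne'' : m.erase c ≠ u.erase c := by
        intro h
        apply hne
        rw [← hm'm, ← hu'u, h, heq]
      have hsub : (m.erase c).support ⊆ m.support := by
        rw [Finsupp.support_erase]; exact Finset.erase_subset _ _
      have hchain' : ∀ a ∈ (m.erase c).support, ∀ b ∈ (m.erase c).support, a ≤ b ∨ b ≤ a :=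
        fun a ha b hb => hchain a (hsub ha) b (hsub hb)
      have hdegle : expDeg (m.erase c) ≤ N := by omega
      rcases ih (m.erase c) (u.erase c) hdegle hchain' hpsi' hne'' with h | ⟨-, j, hj, hp⟩
      · exfalso
        have : expDeg (m.erase c) = expDeg (u.erase c) := congrArg Prod.fst hpsi'
        omega
      · have hjc : j ≠ c := by
          intro h; rw [h] at hj
          simp [Finsupp.erase_same] at hj
        refine Or.inr ⟨hdm, j, ?_, fun k hk => ?_⟩
        · rwa [Finsupp.erase_ne hjc, Finsupp.erase_ne hjc] at hj
        · by_cases hkc : k = c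
          · rw [hkc]; exact heq.symm
          · have := hp k hk
            rwa [Finsupp.erase_ne hkc, Finsupp.erase_ne hkc] at this

end


section
variable {d : ℕ} {n : Fin d → ℕ}


lemma eq_of_le_of_expDeg_eq {α β : Idx n →₀ ℕ} (h : α ≤ β) (h2 : expDeg α = expDeg β) :
    α = β := by
  have h3 : α + (β - α) = β := add_tsub_cancel_of_le h
  have h4 : expDeg α + expDeg (β - α) = expDeg β := by rw [← expDeg_add, h3]
  have h5 : expDeg (β - α) = 0 := by omega
  rw [← h3, expDeg_eq_zero h5, add_zero]

lemma support_sub_monomials {α β : Idx n →₀ ℕ} (hne : α ≠ β) :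
    (monomial α (1:ℝ) - monomial β 1).support = {α, β} := by
  classical
  ext γ
  rw [MvPolynomial.mem_support_iff, MvPolynomial.coeff_sub, MvPolynomial.coeff_monomial,
    MvPolynomial.coeff_monomial]
  simp only [Finset.mem_insert, Finset.mem_singleton]
  by_cases h1 : α = γ <;> by_cases h2 : β = γ <;> simp_all [eq_comm] <;> norm_num

lemma coeff_sub_monomials {α β : Idx n →₀ ℕ} (hne : α ≠ β) :
    MvPolynomial.coeff α (monomial α (1:ℝ) - monomial β 1) = 1 := by
  classical
  rw [MvPolynomial.coeff_sub, MvPolynomial.coeff_monomial, MvPolynomial.coeff_monomial]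
  simp [Ne.symm hne]

lemma X_mul_X_eq (a b : Idx n) : (X a * X b : MvPolynomial (Idx n) ℝ) =
    monomial (Finsupp.single a 1 + Finsupp.single b 1) 1 := by
  rw [show (X a : MvPolynomial (Idx n) ℝ) = monomial (Finsupp.single a 1) 1 from rfl,
    show (X b : MvPolynomial (Idx n) ℝ) = monomial (Finsupp.single b 1) 1 from rfl,
    monomial_mul, one_mul]

lemma expDeg_pair (a b : Idx n) :
    expDeg (Finsupp.single a 1 + Finsupp.single b 1) = 2 := by
  rw [expDeg_add, expDeg_single, expDeg_single]

section binfacts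
variable {a b : Idx n} (hab : idxLt a b) (hw : ∃ i, b i < a i)

lemma lead_binomial (hab : idxLt a b) (hw : ∃ i, b i < a i) :
    IsLeadMon (X a * X b - X (amin a b) * X (amax a b))
      (Finsupp.single a 1 + Finsupp.single b 1) := by
  classical
  obtain ⟨i0, hi0, -⟩ := hab
  obtain ⟨i1, hi1⟩ := hw
  set p := amin a b with hp
  set q := amax a b with hq
  have hnab : a ≠ b := by rintro rfl; exact lt_irrefl _ hi0
  have hqa : q ≠ a := by
    intro h
    have h2 : max (a i0) (b i0) = a i0 := congrFun h i0
    have : b i0 ≤ a i0 := by rw [← h2]; exact le_max_right _ _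
    exact absurd hi0 (not_lt.2 this)
  have hqb : q ≠ b := by
    intro h
    have h2 : max (a i1) (b i1) = b i1 := congrFun h i1
    have : a i1 ≤ b i1 := by rw [← h2]; exact le_max_left _ _
    exact absurd hi1 (not_lt.2 this)
  have hpa : p ≠ a := by
    intro h
    have h2 : min (a i1) (b i1) = a i1 := congrFun h i1
    have : a i1 ≤ b i1 := by rw [← h2]; exact min_le_right _ _
    exact absurd hi1 (not_lt.2 this)
  have hpb : p ≠ b := by
    intro h
    have h2 : min (a i0) (b i0) = b i0 := congrFun h i0
    have : b i0 ≤ a i0 := by rw [← h2]; exact min_le_left _ _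
    exact absurd hi0 (not_lt.2 this)
  set α : Idx n →₀ ℕ := Finsupp.single a 1 + Finsupp.single b 1 with hα
  set β : Idx n →₀ ℕ := Finsupp.single p 1 + Finsupp.single q 1 with hβ
  have hαβ : α ≠ β := by
    intro h
    have h2 : α a = β a := by rw [h]
    rw [hα, hβ] at h2
    simp [Finsupp.single_apply, Ne.symm hnab, hpa, hqa] at h2
  have hgrev : grevlexLt β α := by
    refine Or.inr ⟨by rw [hα, hβ, expDeg_pair, expDeg_pair], q, ?_, ?_⟩
    · have h1 : α q = 0 := by
        rw [hα]; simp [Finsupp.single_apply, Ne.symm hqa, Ne.symm hqb]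
      have h2 : β q = (if p = q then 1 else 0) + 1 := by
        rw [hβ]; simp [Finsupp.single_apply]
      rw [h1, h2]; positivity
    · intro k hk
      have hka : k ≠ a := by
        rintro rfl
        exact not_idxLt_of_le (fun i => le_max_left _ _) hk
      have hkb : k ≠ b := by
        rintro rfl
        exact not_idxLt_of_le (fun i => le_max_right _ _) hk
      have hkp : k ≠ p := by
        rintro rfl
        exact not_idxLt_of_le (fun i => le_trans (min_le_left _ _) (le_max_left _ _)) hk
      have hkq : k ≠ q := by
        rintro rfl
        exact idxLt_irrefl _ hk
      rw [hα, hβ]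
      simp [Finsupp.single_apply, Ne.symm hka, Ne.symm hkb, Ne.symm hkp, Ne.symm hkq]
  have hrw : X a * X b - X p * X q = monomial α (1:ℝ) - monomial β 1 := by
    rw [X_mul_X_eq, X_mul_X_eq, hα, hβ]
  rw [hrw]
  constructor
  · rw [support_sub_monomials hαβ]
    exact Finset.mem_insert_self _ _
  · intro m' hm' hne'
    rw [support_sub_monomials hαβ, Finset.mem_insert, Finset.mem_singleton] at hm'
    rcases hm' with h | h
    · exact absurd h hne'
    · rw [h]; exact hgrev

end binfacts

lemma lead_unique {f : MvPolynomial (Idx n) ℝ} {m m' : Idx n →₀ ℕ}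
    (h1 : IsLeadMon f m) (h2 : IsLeadMon f m') : m = m' := by
  by_contra h
  exact grevlexLt_asymm (h1.2 m' h2.1 (Ne.symm h)) (h2.2 m h1.1 h)

end




open scoped Classical


section
variable {d : ℕ} {n : Fin d → ℕ}

noncomputable def psiHom {d : ℕ} {n : Fin d → ℕ} :
    (Idx n →₀ ℕ) →+ ℕ × (Fin d → Multiset ℕ) where
  toFun := psi
  map_zero' := psi_zero
  map_add' := fun u v => psi_add

noncomputable def phi {d : ℕ} {n : Fin d → ℕ} :
    MvPolynomial (Idx n) ℝ →+* AddMonoidAlgebra ℝ (ℕ × (Fin d → Multiset ℕ)) :=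
  AddMonoidAlgebra.mapDomainRingHom ℝ psiHom

lemma phi_monomial {γ : Idx n →₀ ℕ} :
    phi (monomial γ (1:ℝ)) = AddMonoidAlgebra.single (psi γ) 1 := by
  rw [← MvPolynomial.single_eq_monomial]
  exact AddMonoidAlgebra.mapDomain_single

lemma phi_apply (f : MvPolynomial (Idx n) ℝ) (x : ℕ × (Fin d → Multiset ℕ)) :
    (phi f).coeff x = ∑ u ∈ f.support, (if psi u = x then MvPolynomial.coeff u f else 0) := by
  show Finsupp.mapDomain psi (AddMonoidAlgebra.coeff f) x = _
  rw [Finsupp.mapDomain, Finsupp.sum_apply, Finsupp.sum]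
  refine Finset.sum_congr rfl fun u _ => ?_
  rw [Finsupp.single_apply]
  rfl

lemma psi_pair_eq (a b : Idx n) :
    psi (Finsupp.single a 1 + Finsupp.single b 1) =
      psi (Finsupp.single (amin a b) 1 + Finsupp.single (amax a b) 1) := by
  unfold psi
  refine Prod.ext ?_ ?_
  · show expDeg _ = expDeg _
    rw [expDeg_pair, expDeg_pair]
  · show coordMS _ = coordMS _
    funext i
    rw [coordMS_add, coordMS_add]
    show (coordMS _ i + coordMS _ i : Multiset ℕ) = coordMS _ i + coordMS _ i
    rw [coordMS_single, coordMS_single, coordMS_single, coordMS_single]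
    show (1 • {(a i : ℕ)} + 1 • {(b i : ℕ)} : Multiset ℕ) =
      1 • {(min (a i) (b i) : ℕ)} + 1 • {(max (a i) (b i) : ℕ)}
    rcases le_total ((a i : ℕ)) ((b i : ℕ)) with h | h
    · rw [min_eq_left h, max_eq_right h]
    · rw [min_eq_right h, max_eq_left h, add_comm]

lemma phi_ker {f : MvPolynomial (Idx n) ℝ} (hf : f ∈ I0 n) : phi f = 0 := by
  have hle : I0 n ≤ RingHom.ker phi := by
    rw [I0]
    apply Ideal.span_le.2
    rintro g ⟨a, b, rfl⟩
    rw [SetLike.mem_coe, RingHom.mem_ker, X_mul_X_eq, X_mul_X_eq, map_sub,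
      phi_monomial, phi_monomial, psi_pair_eq, sub_self]
  exact RingHom.mem_ker.1 (hle hf)

lemma le_pair {a b : Idx n} {m : Idx n →₀ ℕ} (ha : a ∈ m.support) (hb : b ∈ m.support)
    (hne : a ≠ b) : (Finsupp.single a 1 + Finsupp.single b 1 : Idx n →₀ ℕ) ≤ m := by
  rw [Finsupp.le_def]
  intro k
  rw [Finsupp.add_apply, Finsupp.single_apply, Finsupp.single_apply]
  have ha' : 1 ≤ m a := Nat.one_le_iff_ne_zero.2 (Finsupp.mem_support_iff.1 ha)
  have hb' : 1 ≤ m b := Nat.one_le_iff_ne_zero.2 (Finsupp.mem_support_iff.1 hb)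
  by_cases h1 : a = k
  · subst h1
    rw [if_pos rfl, if_neg (Ne.symm hne)]
    omega
  · rw [if_neg h1]
    by_cases h2 : b = k
    · subst h2; rw [if_pos rfl]; omega
    · rw [if_neg h2]; omega

lemma pair_eq {a b a' b' : Idx n}
    (h : (Finsupp.single a' 1 + Finsupp.single b' 1 : Idx n →₀ ℕ) =
      Finsupp.single a 1 + Finsupp.single b 1)
    (hab : a ≠ b) (hab' : a' ≠ b') :
    (a' = a ∧ b' = b) ∨ (a' = b ∧ b' = a) := by
  have key : a = a' ∨ b = a' := by
    by_contra hk
    push_neg at hk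
    have h1 := DFunLike.congr_fun h a'
    rw [Finsupp.add_apply, Finsupp.add_apply, Finsupp.single_apply, Finsupp.single_apply,
      Finsupp.single_apply, Finsupp.single_apply] at h1
    simp [Ne.symm hab', hk.1, hk.2] at h1
  rcases key with hk | hk
  · left
    refine ⟨hk.symm, ?_⟩
    have h2 : (Finsupp.single a' 1 : Idx n →₀ ℕ) + Finsupp.single b' 1 =
        Finsupp.single a' 1 + Finsupp.single b 1 := by rw [h, hk]
    exact (Finsupp.single_left_inj one_ne_zero).1 (add_left_cancel h2)
  · right
    refine ⟨hk.symm, ?_⟩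
    have h2 : (Finsupp.single b' 1 : Idx n →₀ ℕ) + Finsupp.single a' 1 =
        Finsupp.single a 1 + Finsupp.single a' 1 := by rw [add_comm, h, hk]
    exact (Finsupp.single_left_inj one_ne_zero).1 (add_right_cancel h2)

lemma bin_ne {a b : Idx n} (hab : idxLt a b) (hw : ∃ i, b i < a i) :
    (Finsupp.single a 1 + Finsupp.single b 1 : Idx n →₀ ℕ) ≠
      Finsupp.single (amin a b) 1 + Finsupp.single (amax a b) 1 := by
  obtain ⟨i0, hi0, -⟩ := hab
  obtain ⟨i1, hi1⟩ := hw
  intro h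
  have hnab : a ≠ b := by rintro rfl; exact lt_irrefl _ hi0
  have hpa : amin a b ≠ a := by
    intro hh
    have h2 : min (a i1) (b i1) = a i1 := congrFun hh i1
    have : a i1 ≤ b i1 := by rw [← h2]; exact min_le_right _ _
    exact absurd hi1 (not_lt.2 this)
  have hqa : amax a b ≠ a := by
    intro hh
    have h2 : max (a i0) (b i0) = a i0 := congrFun hh i0
    have : b i0 ≤ a i0 := by rw [← h2]; exact le_max_right _ _
    exact absurd hi0 (not_lt.2 this)
  have h2 := DFunLike.congr_fun h a
  rw [Finsupp.add_apply, Finsupp.add_apply, Finsupp.single_apply, Finsupp.single_apply,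
    Finsupp.single_apply, Finsupp.single_apply] at h2
  simp [Ne.symm hnab, hpa, hqa] at h2

lemma amin_ne_amax {a b : Idx n} (hw : ∃ i, b i < a i) : amin a b ≠ amax a b := by
  obtain ⟨i1, hi1⟩ := hw
  intro h
  have h2 : min (a i1) (b i1) = max (a i1) (b i1) := congrFun h i1
  have hlt : min (a i1) (b i1) < max (a i1) (b i1) :=
    lt_of_le_of_lt (min_le_right _ _) (lt_of_lt_of_le hi1 (le_max_left _ _))
  exact absurd h2 (ne_of_lt hlt)

end



section
variable {d : ℕ} {n : Fin d → ℕ}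

lemma not_le_witness {a b : Idx n} (h : ¬ a ≤ b) : ∃ i, b i < a i := by
  rw [Pi.le_def] at h
  push_neg at h
  obtain ⟨i, hi⟩ := h
  exact ⟨i, hi⟩

end


/-- `𝒢₀` is the reduced Gröbner basis of the rank-1 binomial ideal `I₀` w.r.t. grevlex. -/
theorem G0_isReducedGroebnerBasis {d : ℕ} (n : Fin d → ℕ) :
    IsReducedGroebnerBasis (G0 n) (I0 n) := by
  constructor
  · constructor
    · -- span equality
      apply le_antisymm
      · apply Ideal.span_mono
        rintro g ⟨a, b, hab, hw, rfl⟩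
        exact ⟨a, b, rfl⟩
      · rw [I0]
        apply Ideal.span_le.2
        rintro g ⟨a, b, rfl⟩
        by_cases hab : a ≤ b
        · have h1 : amin a b = a := funext fun i => min_eq_left (hab i)
          have h2 : amax a b = b := funext fun i => max_eq_right (hab i)
          rw [h1, h2, sub_self]
          exact (Ideal.span (G0 n)).zero_mem
        · by_cases hba : b ≤ a
          · have h1 : amin a b = b := funext fun i => min_eq_right (hba i)
            have h2 : amax a b = a := funext fun i => max_eq_left (hba i)
            have h3 : X a * X b - X (amin a b) * X (amax a b) = (0 : MvPolynomial (Idx n) ℝ) := by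
              rw [h1, h2]; ring
            rw [h3]
            exact (Ideal.span (G0 n)).zero_mem
          · have hw1 : ∃ i, b i < a i := not_le_witness hab
            have hw2 : ∃ i, a i < b i := not_le_witness hba
            have hne : a ≠ b := fun h => hab (h ▸ le_refl a)
            rcases idxLt_trichotomy hne with h | h
            · exact Ideal.subset_span ⟨a, b, h, hw1, rfl⟩
            · have h1 : amin a b = amin b a := funext fun i => min_comm _ _
              have h2 : amax a b = amax b a := funext fun i => max_comm _ _
              have h3 : (X a * X b - X (amin a b) * X (amax a b) : MvPolynomial (Idx n) ℝ)
                  = X b * X a - X (amin b a) * X (amax b a) := by rw [h1, h2]; ring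
              rw [h3]
              exact Ideal.subset_span ⟨b, a, h, hw2, rfl⟩
    · -- Gröbner property
      intro f hf hf0 m hm
      by_contra hcon
      push_neg at hcon
      have hchain : ∀ a ∈ m.support, ∀ b ∈ m.support, a ≤ b ∨ b ≤ a := by
        intro a ha b hb
        by_contra hc
        push_neg at hc
        obtain ⟨h1, h2⟩ := hc
        have hw1 : ∃ i, b i < a i := not_le_witness h1
        have hw2 : ∃ i, a i < b i := not_le_witness h2
        have hne : a ≠ b := fun h => h1 (h ▸ le_refl a)
        rcases idxLt_trichotomy hne with h | h
        · exact hcon _ ⟨a, b, h, hw1, rfl⟩ _ (lead_binomial h hw1) (le_pair ha hb hne)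
        · exact hcon _ ⟨b, a, h, hw2, rfl⟩ _ (lead_binomial h hw2) (le_pair hb ha hne.symm)
      have hphif : phi f = 0 := phi_ker hf
      have hsum : ∑ u ∈ f.support, (if psi u = psi m then MvPolynomial.coeff u f else 0) = 0 := by
        rw [← phi_apply f (psi m), hphif]
        rfl
      have hsingle : ∑ u ∈ f.support, (if psi u = psi m then MvPolynomial.coeff u f else 0)
          = MvPolynomial.coeff m f := by
        rw [Finset.sum_eq_single_of_mem m hm.1]
        · rw [if_pos rfl]
        · intro u hu hneu
          by_cases hpsi : psi u = psi m
          · exfalso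
            have hmin := chain_grevlex_min (expDeg m) m u le_rfl hchain hpsi.symm
              (fun h => hneu (h.symm))
            exact grevlexLt_asymm (hm.2 u hu hneu) hmin
          · rw [if_neg hpsi]
      rw [hsingle] at hsum
      exact MvPolynomial.mem_support_iff.1 hm.1 hsum
  · -- reducedness
    rintro g ⟨a, b, hab, hw, rfl⟩
    have hlead := lead_binomial hab hw
    have hne_bin := bin_ne hab hw
    have hrw : X a * X b - X (amin a b) * X (amax a b) =
        monomial (Finsupp.single a 1 + Finsupp.single b 1) (1:ℝ) -
        monomial (Finsupp.single (amin a b) 1 + Finsupp.single (amax a b) 1) 1 := by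
      rw [X_mul_X_eq, X_mul_X_eq]
    constructor
    · intro m hm
      have hmeq := lead_unique hm hlead
      rw [hmeq, hrw]
      exact coeff_sub_monomials hne_bin
    · intro m hmem g' hg' hne' m' hm' hle
      obtain ⟨a', b', hab', hw', rfl⟩ := hg'
      have hab'ne : a' ≠ b' := by
        rintro rfl
        exact idxLt_irrefl _ hab'
      have habne : a ≠ b := by
        rintro rfl
        exact idxLt_irrefl _ hab
      have hm'eq : m' = Finsupp.single a' 1 + Finsupp.single b' 1 :=
        lead_unique hm' (lead_binomial hab' hw')
      rw [hrw, support_sub_monomials hne_bin, Finset.mem_insert, Finset.mem_singleton] at hmem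
      have hdeg2 : expDeg m = 2 := by
        rcases hmem with h | h <;> rw [h, expDeg_pair]
      have hmeq : m' = m := eq_of_le_of_expDeg_eq hle (by rw [hm'eq, expDeg_pair, hdeg2])
      have hpair := hmeq ▸ hm'eq
      rcases hmem with h | h
      · rw [h] at hpair
        rcases pair_eq hpair.symm habne hab'ne with ⟨h1, h2⟩ | ⟨h1, h2⟩
        · exact hne' (by rw [h1, h2])
        · rw [h1, h2] at hab'
          exact idxLt_asymm hab hab'
      · rw [h] at hpair
        rcases pair_eq hpair.symm (amin_ne_amax hw) hab'ne with ⟨h1, h2⟩ | ⟨h1, h2⟩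
        · obtain ⟨i, hi⟩ := hw'
          rw [h1, h2] at hi
          exact absurd hi (not_lt.2 (le_trans (min_le_left _ _) (le_max_left _ _)))
        · obtain ⟨i, hi, -⟩ := hab'
          rw [h1, h2] at hi
          exact absurd hi (not_lt.2 (le_trans (min_le_left _ _) (le_max_left _ _)))
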